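/- Let P be a 2-neighborly simplicial d-polytope and let ω be an affine 1-stress on P. Then λ := ω² is an affine 2-stress on P, and for any vertex v in the support of ω, the partial derivative ∂λ/∂x_v = 2 ω_v ω is a nonzero scalar multiple of ω. Consequently, the linear span of {∂λ/∂x_v : v ∈ V(∂P), λ ∈ Stress_2(P)} contains Stress_1(P). -/

import Mathlib

open scoped Classical

noncomputable section

/-- The body of the polytope with vertex embedding `p`. -/
def body {V : Type} [Fintype V] {d : ℕ} (p : V → EuclideanSpace ℝ (Fin d)) :
    Set (EuclideanSpace ℝ (Fin d)) :=
  convexHull ℝ (Set.range p)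

/-- A finite vertex set `F` spans a proper (exposed) face of the polytope. -/
def IsBdryFace {V : Type} [Fintype V] {d : ℕ} (p : V → EuclideanSpace ℝ (Fin d))
    (F : Finset V) : Prop :=
  IsExposed ℝ (body p) (convexHull ℝ (p '' (F : Set V))) ∧
    convexHull ℝ (p '' (F : Set V)) ≠ body p

/-- `p` is the vertex embedding of a simplicial `d`-polytope: the points are distinct
extreme points, they affinely span `ℝ^d`, and every proper exposed face is the convex hull
of an affinely independent set of vertices (a geometric simplex). -/
structure IsSimplicialPolytope {V : Type} [Fintype V] {d : ℕ}
    (p : V → EuclideanSpace ℝ (Fin d)) : Prop where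
  inj : Function.Injective p
  spans : affineSpan ℝ (Set.range p) = ⊤
  vertex : ∀ v, p v ∈ Set.extremePoints ℝ (body p)
  simplicial : ∀ F : Set (EuclideanSpace ℝ (Fin d)), IsExposed ℝ (body p) F →
    F ≠ body p → ∃ W : Finset V,
      AffineIndependent ℝ (fun w : (W : Set V) => p w) ∧ F = convexHull ℝ (p '' W)

/-- The graph of the polytope: two vertices are adjacent iff they span a proper face. -/
def polyGraph {V : Type} [Fintype V] {d : ℕ} (p : V → EuclideanSpace ℝ (Fin d)) :
    SimpleGraph V where
  Adj a b := a ≠ b ∧ IsBdryFace p {a, b}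
  symm := by
    constructor
    intro a b h
    exact ⟨h.1.symm, by rw [Finset.pair_comm]; exact h.2⟩
  loopless := by constructor; intro a h; exact h.1 rfl
/-- The differential operator `∂_ℓ` associated to a linear form with coefficients `l`. -/
def Dop {V : Type} [Fintype V] (l : V → ℝ) (q : MvPolynomial V ℝ) : MvPolynomial V ℝ :=
  ∑ v : V, l v • MvPolynomial.pderiv v q

/-- The exponent vector of the squarefree monomial `∏_{v ∈ G} x_v`. -/
def sqFree {V : Type} (G : Finset V) : V →₀ ℕ :=
  ∑ v ∈ G, Finsupp.single v 1

/-- An affine `k`-stress on the simplicial polytope with vertex embedding `p`: a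
homogeneous degree-`k` polynomial, each of whose monomials is supported on a proper face,
annihilated by the `d` coordinate differential operators and the all-ones operator. -/
def IsPolyStress {V : Type} [Fintype V] {d : ℕ} (p : V → EuclideanSpace ℝ (Fin d))
    (k : ℕ) (lam : MvPolynomial V ℝ) : Prop :=
  lam.IsHomogeneous k ∧
  (∀ m ∈ lam.support, IsBdryFace p m.support) ∧
  (∀ i : Fin d, Dop (fun v => p v i) lam = 0) ∧
  Dop (fun _ => (1 : ℝ)) lam = 0
-- auxiliary lemmas

lemma degree_one_eq_single {V : Type} (m : V →₀ ℕ) (h : m.degree = 1) :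
    ∃ u, m = Finsupp.single u 1 := by
  have hne : m ≠ 0 := by
    intro h0; rw [h0, map_zero] at h; exact one_ne_zero h.symm
  obtain ⟨u, hu⟩ := Finsupp.support_nonempty_iff.2 hne
  refine ⟨u, ?_⟩
  have hu1 : m u = 1 := by
    have h1 : 1 ≤ m u := Nat.one_le_iff_ne_zero.2 (Finsupp.mem_support_iff.1 hu)
    have h2 : m u ≤ 1 := h ▸ Finsupp.le_degree u m
    omega
  ext w
  rcases eq_or_ne w u with rfl | hw
  · simp [hu1]
  · rw [Finsupp.single_apply, if_neg (Ne.symm hw)]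
    by_contra hmw
    have hws : w ∈ m.support := Finsupp.mem_support_iff.2 hmw
    have hle : m u + m w ≤ m.degree := by
      have hsub : ({u, w} : Finset V) ⊆ m.support := by
        intro x hx
        simp only [Finset.mem_insert, Finset.mem_singleton] at hx
        rcases hx with rfl | rfl
        · exact hu
        · exact hws
      calc m u + m w = ∑ x ∈ ({u, w} : Finset V), m x := by
            rw [Finset.sum_pair hw.symm]
        _ ≤ ∑ x ∈ m.support, m x := Finset.sum_le_sum_of_subset hsub
        _ = m.degree := rfl
    have : 1 ≤ m w := Nat.one_le_iff_ne_zero.2 hmw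
    omega

lemma support_single_of_hom1 {V : Type} {ω : MvPolynomial V ℝ} (hω : ω.IsHomogeneous 1)
    {m : V →₀ ℕ} (hm : ω.coeff m ≠ 0) : ∃ u, m = Finsupp.single u 1 := by
  apply degree_one_eq_single
  rw [Finsupp.degree_eq_weight_one]
  exact hω hm

lemma rep1 {V : Type} [Fintype V] {ω : MvPolynomial V ℝ} (hω : ω.IsHomogeneous 1) :
    ω = ∑ v : V, MvPolynomial.C (ω.coeff (Finsupp.single v 1)) * MvPolynomial.X v := by
  apply MvPolynomial.ext; intro m
  rw [MvPolynomial.coeff_sum]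
  simp only [MvPolynomial.coeff_C_mul, MvPolynomial.coeff_X']
  by_cases h : ∃ u, Finsupp.single u 1 = m
  · obtain ⟨u, rfl⟩ := h
    rw [Finset.sum_eq_single u]
    · simp
    · intro v _ hv
      rw [if_neg, mul_zero]
      intro hc
      exact hv ((Finsupp.single_left_inj one_ne_zero).1 hc)
    · intro h; exact absurd (Finset.mem_univ u) h
  · push_neg at h
    have h0 : ω.coeff m = 0 := by
      by_contra hc
      obtain ⟨u, hu⟩ := support_single_of_hom1 hω hc
      exact h u hu.symm
    rw [h0]
    exact (Finset.sum_eq_zero fun v _ => by rw [if_neg (h v), mul_zero]).symm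

lemma pderiv1 {V : Type} [Fintype V] {ω : MvPolynomial V ℝ} (hω : ω.IsHomogeneous 1) (v : V) :
    MvPolynomial.pderiv v ω = MvPolynomial.C (ω.coeff (Finsupp.single v 1)) := by
  conv_lhs => rw [rep1 hω]
  rw [map_sum]
  rw [Finset.sum_eq_single v]
  · rw [MvPolynomial.pderiv_C_mul, MvPolynomial.pderiv_X_self, mul_one]
  · intro u _ hu
    rw [MvPolynomial.pderiv_C_mul, MvPolynomial.pderiv_X_of_ne hu, mul_zero]
  · intro h; exact absurd (Finset.mem_univ v) h

lemma Dop_hom1 {V : Type} [Fintype V] (l : V → ℝ) {ω : MvPolynomial V ℝ}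
    (hω : ω.IsHomogeneous 1) :
    Dop l ω = MvPolynomial.C (∑ v : V, l v * ω.coeff (Finsupp.single v 1)) := by
  unfold Dop
  rw [map_sum]
  apply Finset.sum_congr rfl
  intro v _
  rw [pderiv1 hω, MvPolynomial.smul_eq_C_mul, ← map_mul]

lemma pderiv_sq {V : Type} [Fintype V] {ω : MvPolynomial V ℝ} (hω : ω.IsHomogeneous 1) (v : V) :
    MvPolynomial.pderiv v (ω ^ 2) = (2 * ω.coeff (Finsupp.single v 1)) • ω := by
  rw [sq, MvPolynomial.pderiv_mul, pderiv1 hω, MvPolynomial.smul_eq_C_mul, map_mul, map_ofNat]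
  ring

lemma Dop_sq {V : Type} [Fintype V] (l : V → ℝ) {ω : MvPolynomial V ℝ}
    (hω : ω.IsHomogeneous 1) (h0 : Dop l ω = 0) : Dop l (ω ^ 2) = 0 := by
  have hC : MvPolynomial.C (∑ v : V, l v * ω.coeff (Finsupp.single v 1))
      = (0 : MvPolynomial V ℝ) := by rw [← Dop_hom1 l hω, h0]
  have hsum : ∑ v : V, l v * ω.coeff (Finsupp.single v 1) = 0 :=
    MvPolynomial.C_injective V ℝ (hC.trans (map_zero _).symm)
  unfold Dop
  have heq : ∀ v : V, l v • MvPolynomial.pderiv v (ω ^ 2)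
      = (l v * (2 * ω.coeff (Finsupp.single v 1))) • ω := by
    intro v; rw [pderiv_sq hω, smul_smul]
  rw [Finset.sum_congr rfl (fun v _ => heq v), ← Finset.sum_smul]
  have : ∑ v : V, l v * (2 * ω.coeff (Finsupp.single v 1))
      = 2 * ∑ v : V, l v * ω.coeff (Finsupp.single v 1) := by
    rw [Finset.mul_sum]
    exact Finset.sum_congr rfl fun v _ => by ring
  rw [this, hsum, mul_zero, zero_smul]

lemma exists_ne_of_coeff {V : Type} [Fintype V] {ω : MvPolynomial V ℝ}
    (hω1 : ω.IsHomogeneous 1) (h0 : Dop (fun _ => (1 : ℝ)) ω = 0) {v : V}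
    (hv : ω.coeff (Finsupp.single v 1) ≠ 0) : ∃ w, w ≠ v := by
  by_contra h
  push_neg at h
  have hC : MvPolynomial.C (∑ w : V, (1 : ℝ) * ω.coeff (Finsupp.single w 1))
      = (0 : MvPolynomial V ℝ) := by rw [← Dop_hom1 _ hω1]; exact h0
  have hsum : ∑ w : V, (1 : ℝ) * ω.coeff (Finsupp.single w 1) = 0 :=
    MvPolynomial.C_injective V ℝ (hC.trans (map_zero _).symm)
  have hconst : ∑ w : V, (1 : ℝ) * ω.coeff (Finsupp.single w 1)
      = (Fintype.card V : ℝ) * ω.coeff (Finsupp.single v 1) := by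
    have hc : ∀ w : V, (1 : ℝ) * ω.coeff (Finsupp.single w 1)
        = ω.coeff (Finsupp.single v 1) := fun w => by rw [h w, one_mul]
    rw [Finset.sum_congr rfl (fun w _ => hc w), Finset.sum_const, Finset.card_univ, nsmul_eq_mul]
  rw [hconst] at hsum
  rcases mul_eq_zero.1 hsum with hcard | hcoeff
  · have : 0 < Fintype.card V := Fintype.card_pos_iff.2 ⟨v⟩
    exact absurd hcard (by positivity)
  · exact hv hcoeff

lemma singleton_face {V : Type} [Fintype V] {d : ℕ} {p : V → EuclideanSpace ℝ (Fin d)}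
    (hP : IsSimplicialPolytope p) {v : V} (hex : ∃ w, w ≠ v) : IsBdryFace p {v} := by
  obtain ⟨w0, hw0⟩ := hex
  set s : Set (EuclideanSpace ℝ (Fin d)) := p '' {w | w ≠ v} with hs
  have hsfin : s.Finite := Set.toFinite _
  have hclosed : IsClosed (convexHull ℝ s) := (Set.Finite.isCompact_convexHull (𝕜 := ℝ) hsfin).isClosed
  have hsub : convexHull ℝ s ⊆ body p := by
    apply convexHull_mono
    rintro y ⟨w, _, rfl⟩; exact ⟨w, rfl⟩
  have hnotin : p v ∉ convexHull ℝ s := by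
    intro hmem
    have hx : p v ∈ Set.extremePoints ℝ (convexHull ℝ s) :=
      inter_extremePoints_subset_extremePoints_of_subset hsub ⟨hmem, hP.vertex v⟩
    obtain ⟨w, hwne, hweq⟩ := extremePoints_convexHull_subset hx
    exact hwne (hP.inj hweq)
  obtain ⟨f, u, hfs, hfu⟩ :=
    geometric_hahn_banach_closed_point (convex_convexHull ℝ s) hclosed hnotin
  have hmax : ∀ x ∈ body p, f x ≤ f (p v) := by
    intro x hx
    have hsubset : body p ⊆ {y | f y ≤ f (p v)} := by
      apply convexHull_min
      · rintro y ⟨w, rfl⟩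
        show f (p w) ≤ f (p v)
        rcases eq_or_ne w v with rfl | hw
        · exact le_refl _
        · exact le_of_lt ((hfs _ (subset_convexHull ℝ s ⟨w, hw, rfl⟩)).trans hfu)
      · exact convex_halfSpace_le ⟨f.map_add, f.map_smul⟩ _
    exact hsubset hx
  have hvmem : p v ∈ body p := subset_convexHull ℝ _ ⟨v, rfl⟩
  have hsne : s.Nonempty := ⟨p w0, w0, hw0, rfl⟩
  have hrange : Set.range p = insert (p v) s := by
    ext y; constructor
    · rintro ⟨w, rfl⟩
      rcases eq_or_ne w v with rfl | hw
      · exact Set.mem_insert _ _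
      · exact Set.mem_insert_iff.2 (Or.inr ⟨w, hw, rfl⟩)
    · rintro (rfl | ⟨w, _, rfl⟩)
      exacts [⟨v, rfl⟩, ⟨w, rfl⟩]
  have hface : {x ∈ body p | ∀ y ∈ body p, f y ≤ f x} = {p v} := by
    apply Set.eq_singleton_iff_unique_mem.2
    refine ⟨⟨hvmem, hmax⟩, ?_⟩
    rintro x ⟨hxb, hxmax⟩
    have hge : f (p v) ≤ f x := hxmax _ hvmem
    have hxj : x ∈ convexJoin ℝ {p v} (convexHull ℝ s) := by
      rw [← convexHull_insert hsne, ← hrange]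
      exact hxb
    obtain ⟨a, ha, b, hb, hseg⟩ := mem_convexJoin.1 hxj
    rw [Set.mem_singleton_iff] at ha; subst ha
    obtain ⟨t, r, ht, hr, htr, hx⟩ := hseg
    have hfb : f b < f (p v) := (hfs b hb).trans hfu
    have hr0 : r = 0 := by
      by_contra hrne
      have hrpos : 0 < r := lt_of_le_of_ne hr (Ne.symm hrne)
      have hlt : f x < f (p v) := by
        rw [← hx]
        have : f (t • p v + r • b) = t * f (p v) + r * f b := by
          rw [map_add, map_smul, map_smul]; rfl
        rw [this]
        calc t * f (p v) + r * f b < t * f (p v) + r * f (p v) := by nlinarith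
          _ = f (p v) := by rw [← add_mul, htr, one_mul]
      linarith
    have ht1 : t = 1 := by linarith
    rw [← hx, hr0, ht1, zero_smul, add_zero, one_smul]
  have himg : convexHull ℝ (p '' (({v} : Finset V) : Set V)) = {p v} := by
    rw [Finset.coe_singleton, Set.image_singleton, convexHull_singleton]
  constructor
  · rw [himg]
    intro _
    exact ⟨f, hface.symm⟩
  · rw [himg]
    intro heq
    have hmem : p w0 ∈ body p := subset_convexHull ℝ _ ⟨w0, rfl⟩
    rw [← heq] at hmem
    exact hw0 (hP.inj hmem)

lemma stress_sq {V : Type} [Fintype V] {d : ℕ} {p : V → EuclideanSpace ℝ (Fin d)}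
    (hP : IsSimplicialPolytope p)
    (hneigh : ∀ S : Finset V, S.card = 2 → IsBdryFace p S)
    {ω : MvPolynomial V ℝ} (hω : IsPolyStress p 1 ω) : IsPolyStress p 2 (ω ^ 2) := by
  obtain ⟨h1, _hsup, hD, hones⟩ := hω
  refine ⟨?_, ?_, fun i => Dop_sq _ h1 (hD i), Dop_sq _ h1 hones⟩
  · have := h1.mul h1
    rwa [← sq] at this
  · intro m hm
    rw [sq] at hm
    have hmm := MvPolynomial.support_mul ω ω hm
    rw [Finset.mem_add] at hmm
    obtain ⟨a, ha, b, hb, hab⟩ := hmm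
    subst hab
    have hca : ω.coeff a ≠ 0 := MvPolynomial.mem_support_iff.1 ha
    have hcb : ω.coeff b ≠ 0 := MvPolynomial.mem_support_iff.1 hb
    obtain ⟨u1, rfl⟩ := support_single_of_hom1 h1 hca
    obtain ⟨u2, rfl⟩ := support_single_of_hom1 h1 hcb
    rcases eq_or_ne u1 u2 with rfl | hu
    · have hsupp : (Finsupp.single u1 1 + Finsupp.single u1 1).support = {u1} := by
        rw [← Finsupp.single_add]
        exact Finsupp.support_single_ne_zero _ (by norm_num)
      rw [hsupp]
      exact singleton_face hP (exists_ne_of_coeff h1 hones hca)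
    · have hdisj : Disjoint (Finsupp.single u1 (1:ℕ)).support
          (Finsupp.single u2 (1:ℕ)).support := by
        rw [Finsupp.support_single_ne_zero _ one_ne_zero,
          Finsupp.support_single_ne_zero _ one_ne_zero]
        exact Finset.disjoint_singleton.2 hu
      have hsupp : (Finsupp.single u1 1 + Finsupp.single u2 1).support = {u1, u2} := by
        rw [Finsupp.support_add_eq hdisj, Finsupp.support_single_ne_zero _ one_ne_zero,
          Finsupp.support_single_ne_zero _ one_ne_zero]
        ext x; simp
      rw [hsupp]
      exact hneigh _ (by rw [Finset.card_insert_of_notMem (by simp [hu]),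
        Finset.card_singleton])


/-- for a 2-neighborly simplicial `d`-polytope `P` and an affine 1-stress
`ω` on `P`, `λ = ω²` is an affine 2-stress; for every vertex `v` in the support of `ω`,
`∂λ/∂x_v = 2 ω_v ω` is a nonzero multiple of `ω`; consequently `Stress₁(P)` is contained in
the span of the partial derivatives of affine 2-stresses. -/
theorem stmt18 {V : Type} [Fintype V] {d : ℕ}
    (p : V → EuclideanSpace ℝ (Fin d)) (hP : IsSimplicialPolytope p)
    (hneigh : ∀ S : Finset V, S.card = 2 → IsBdryFace p S)
    (ω : MvPolynomial V ℝ) (hω : IsPolyStress p 1 ω) :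
    IsPolyStress p 2 (ω ^ 2) ∧
    (∀ v : V, ω.coeff (Finsupp.single v 1) ≠ 0 →
      MvPolynomial.pderiv v (ω ^ 2) = (2 * ω.coeff (Finsupp.single v 1)) • ω) ∧
    {q : MvPolynomial V ℝ | IsPolyStress p 1 q} ⊆
      ↑(Submodule.span ℝ {q : MvPolynomial V ℝ |
        ∃ (v : V) (lam : MvPolynomial V ℝ), IsPolyStress p 2 lam ∧
          q = MvPolynomial.pderiv v lam}) := by
  refine ⟨stress_sq hP hneigh hω, fun v _ => pderiv_sq hω.1 v, ?_⟩
  intro q hq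
  rw [Set.mem_setOf_eq] at hq
  rw [SetLike.mem_coe]
  rcases eq_or_ne q 0 with rfl | hq0
  · exact Submodule.zero_mem _
  · obtain ⟨m, hm⟩ := Finset.nonempty_iff_ne_empty.2
      (fun h => hq0 (MvPolynomial.support_eq_empty.1 h))
    have hcm : q.coeff m ≠ 0 := MvPolynomial.mem_support_iff.1 hm
    obtain ⟨u, rfl⟩ := support_single_of_hom1 hq.1 hcm
    have hne : (2 : ℝ) * q.coeff (Finsupp.single u 1) ≠ 0 := mul_ne_zero two_ne_zero hcm
    have hmem : MvPolynomial.pderiv u (q ^ 2) ∈ Submodule.span ℝ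
        {r : MvPolynomial V ℝ | ∃ (v : V) (lam : MvPolynomial V ℝ),
          IsPolyStress p 2 lam ∧ r = MvPolynomial.pderiv v lam} :=
      Submodule.subset_span ⟨u, q ^ 2, stress_sq hP hneigh hq, rfl⟩
    have hqeq : q = ((2 : ℝ) * q.coeff (Finsupp.single u 1))⁻¹ •
        MvPolynomial.pderiv u (q ^ 2) := by
      rw [pderiv_sq hq.1, smul_smul, inv_mul_cancel₀ hne, one_smul]
    rw [hqeq]
    exact Submodule.smul_mem _ _ hmem

end
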